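/- Let p, q ≥ 3 be odd integers. The number of pairs (J_1, J_2) ∈ A_{p,i_1} × A_{q,i_2} (with A_{p,i} = {(j_1,…,j_p) ∈ {±1,…,±b_n}^p : Σ (-1)^k j_k = 2i-1-n}) such that every element of the combined multiset S_{J_1} ∪ S_{J_2} has multiplicity exactly 2 and S_{J_1} ∩ S_{J_2} ≠ ∅, with 2i_1 - n - 1 ≠ 0 and 2i_2 - n - 1 ≠ 0 and i_1 ≠ i_2, is at most C · b_n^{(p+q-4)/2} for a constant C depending only on p and q. -/

import Mathlib

open Finset

namespace CountCross

variable {p q : ℕ}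

def lsign : Fin p ⊕ Fin q → ℤ := Sum.elim (fun k => (-1 : ℤ) ^ ((k : ℕ) + 1)) (fun _ => 0)
def rsign : Fin p ⊕ Fin q → ℤ := Sum.elim (fun _ => 0) (fun k => (-1 : ℤ) ^ ((k : ℕ) + 1))
def ρ (t : Fin p ⊕ Fin q) : ℕ := (finSumFinEquiv t : ℕ)

lemma ρ_inj : Function.Injective (ρ (p := p) (q := q)) := fun _ _ h =>
  finSumFinEquiv.injective (Fin.val_injective h)

def coA (σ : Fin p ⊕ Fin q → Fin p ⊕ Fin q) (t : Fin p ⊕ Fin q) : ℤ := lsign t + lsign (σ t)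
def coB (σ : Fin p ⊕ Fin q → Fin p ⊕ Fin q) (t : Fin p ⊕ Fin q) : ℤ := rsign t + rsign (σ t)

def Xset (σ : Fin p ⊕ Fin q → Fin p ⊕ Fin q) : Finset (Fin p ⊕ Fin q) :=
  univ.filter (fun t => ρ t < ρ (σ t))

lemma sum_sign_odd {m : ℕ} (hm : Odd m) : ∑ k : Fin m, (-1:ℤ)^((k:ℕ)+1) = -1 := by
  calc ∑ k : Fin m, (-1:ℤ)^((k:ℕ)+1) = ∑ k ∈ range m, (-1:ℤ)^(k+1) :=
        Fin.sum_univ_eq_sum_range (fun k => (-1:ℤ)^(k+1)) m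
  _ = (-1) * ∑ k ∈ range m, (-1:ℤ)^k := by rw [mul_sum]; exact sum_congr rfl fun k _ => by ring
  _ = -1 := by rw [neg_one_geom_sum, if_neg (by simpa using hm)]; ring

lemma sum_lsign (hpo : Odd p) : ∑ t : Fin p ⊕ Fin q, lsign t = -1 := by
  rw [Fintype.sum_sum_type]
  simp only [lsign, Sum.elim_inl, Sum.elim_inr, sum_const_zero, add_zero]
  exact sum_sign_odd hpo

lemma sum_rsign (hqo : Odd q) : ∑ t : Fin p ⊕ Fin q, rsign t = -1 := by
  rw [Fintype.sum_sum_type]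
  simp only [rsign, Sum.elim_inl, Sum.elim_inr, sum_const_zero, zero_add]
  exact sum_sign_odd hqo

lemma sum_split (σ : Fin p ⊕ Fin q → Fin p ⊕ Fin q) (hinv : ∀ t, σ (σ t) = t)
    (hne : ∀ t, σ t ≠ t) (g : Fin p ⊕ Fin q → ℤ) :
    ∑ t, g t = ∑ t ∈ Xset σ, (g t + g (σ t)) := by
  classical
  have key : ∀ t : Fin p ⊕ Fin q, ¬ ρ t < ρ (σ t) → ρ (σ t) < ρ t := by
    intro t h
    rcases lt_or_eq_of_le (not_lt.mp h) with h' | h'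
    · exact h'
    · exact absurd (ρ_inj h') (hne t)
  have h2 : ∑ x ∈ filter (fun x => ¬ ρ x < ρ (σ x)) univ, g x = ∑ x ∈ Xset σ, g (σ x) := by
    refine Finset.sum_nbij' σ σ ?_ ?_ ?_ ?_ ?_
    · intro a ha
      simp only [mem_filter, mem_univ, true_and] at ha ⊢
      rw [Xset, mem_filter]
      exact ⟨mem_univ _, by rw [hinv]; exact key a ha⟩
    · intro a ha
      simp only [Xset, mem_filter, mem_univ, true_and] at ha
      simp only [mem_filter, mem_univ, true_and]
      rw [hinv]; exact not_lt.mpr (le_of_lt ha)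
    · intro a _; exact hinv a
    · intro a _; exact hinv a
    · intro a _; rw [hinv]
  rw [← Finset.sum_filter_add_sum_filter_not univ (fun t => ρ t < ρ (σ t)) g, h2]
  rw [show filter (fun t => ρ t < ρ (σ t)) univ = Xset σ from rfl, ← Finset.sum_add_distrib]

open Classical in
noncomputable def partner (V : Fin p ⊕ Fin q → ℤ) (t : Fin p ⊕ Fin q) : Fin p ⊕ Fin q :=
  if h : ∃ u, u ≠ t ∧ V u = V t ∧ ∀ w, w ≠ t → V w = V t → w = u then h.choose else t

open Classical in
noncomputable def pivots [NeZero p] (σ : Fin p ⊕ Fin q → Fin p ⊕ Fin q) :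
    (Fin p ⊕ Fin q) × (Fin p ⊕ Fin q) :=
  if h : ∃ ab : (Fin p ⊕ Fin q) × (Fin p ⊕ Fin q),
      coA σ ab.1 * coB σ ab.2 ≠ coA σ ab.2 * coB σ ab.1 then h.choose
  else (Sum.inl ⟨0, Nat.pos_of_ne_zero (NeZero.ne p)⟩,
        Sum.inl ⟨0, Nat.pos_of_ne_zero (NeZero.ne p)⟩)

def mn (σ : Fin p ⊕ Fin q → Fin p ⊕ Fin q) (t : Fin p ⊕ Fin q) : Fin p ⊕ Fin q :=
  if ρ t ≤ ρ (σ t) then t else σ t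

noncomputable def pivA [NeZero p] (σ : Fin p ⊕ Fin q → Fin p ⊕ Fin q) : Fin p ⊕ Fin q :=
  mn σ (pivots σ).1
noncomputable def pivB [NeZero p] (σ : Fin p ⊕ Fin q → Fin p ⊕ Fin q) : Fin p ⊕ Fin q :=
  mn σ (pivots σ).2
noncomputable def core [NeZero p] (σ : Fin p ⊕ Fin q → Fin p ⊕ Fin q) : Finset (Fin p ⊕ Fin q) :=
  ((Xset σ).erase (pivA σ)).erase (pivB σ)
noncomputable def Dset [NeZero p] (σ : Fin p ⊕ Fin q → Fin p ⊕ Fin q) : Finset (Fin p ⊕ Fin q) :=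
  if (core σ).card ≤ (p + q - 4) / 2 then core σ else ∅

lemma Dset_card_le [NeZero p] (σ : Fin p ⊕ Fin q → Fin p ⊕ Fin q) :
    (Dset σ).card ≤ (p + q - 4) / 2 := by
  rw [Dset]; split
  · assumption
  · simp

lemma partner_spec {V : Fin p ⊕ Fin q → ℤ}
    (h2 : ∀ t : Fin p ⊕ Fin q, (univ.filter (fun u => V u = V t)).card = 2)
    (t : Fin p ⊕ Fin q) :
    partner V t ≠ t ∧ V (partner V t) = V t ∧
      ∀ w, w ≠ t → V w = V t → w = partner V t := by
  classical
  have hex : ∃ u, u ≠ t ∧ V u = V t ∧ ∀ w, w ≠ t → V w = V t → w = u := by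
    obtain ⟨x, y, hxy, hs⟩ := Finset.card_eq_two.mp (h2 t)
    have ht : t ∈ ({x, y} : Finset (Fin p ⊕ Fin q)) := by
      rw [← hs, mem_filter]; exact ⟨mem_univ _, rfl⟩
    have hx : x ∈ univ.filter (fun u => V u = V t) := by rw [hs]; simp
    have hy : y ∈ univ.filter (fun u => V u = V t) := by rw [hs]; simp
    rw [mem_filter] at hx hy
    rcases mem_insert.mp ht with rfl | h
    · refine ⟨y, fun h => hxy h.symm, hy.2, fun w hw hVw => ?_⟩
      · have : w ∈ ({t, y} : Finset (Fin p ⊕ Fin q)) := by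
          rw [← hs, mem_filter]; exact ⟨mem_univ _, hVw⟩
        rcases mem_insert.mp this with rfl | h'
        · exact absurd rfl hw
        · exact mem_singleton.mp h'
    · have hty : t = y := mem_singleton.mp h
      subst hty
      refine ⟨x, hxy, hx.2, fun w hw hVw => ?_⟩
      have : w ∈ ({x, t} : Finset (Fin p ⊕ Fin q)) := by
        rw [← hs, mem_filter]; exact ⟨mem_univ _, hVw⟩
      rcases mem_insert.mp this with rfl | h'
      · rfl
      · exact absurd (mem_singleton.mp h') hw
  rw [partner, dif_pos hex]
  exact ⟨hex.choose_spec.1, hex.choose_spec.2.1, hex.choose_spec.2.2⟩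

lemma filter_sum_card (P : Fin p ⊕ Fin q → Prop) [DecidablePred P] :
    (univ.filter P).card
      = (univ.filter (fun k => P (Sum.inl k))).card
        + (univ.filter (fun k => P (Sum.inr k))).card := by
  rw [Finset.card_filter, Finset.card_filter, Finset.card_filter, Fintype.sum_sum_type]

lemma card_Xset (σ : Fin p ⊕ Fin q → Fin p ⊕ Fin q) (hinv : ∀ t, σ (σ t) = t)
    (hne : ∀ t, σ t ≠ t) : 2 * (Xset σ).card = p + q := by
  classical
  have hσinj : Function.Injective σ := fun a b h => by
    rw [← hinv a, h, hinv]
  have himg : (Xset σ).image σ = univ.filter (fun t => ¬ ρ t < ρ (σ t)) := by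
    ext u
    simp only [mem_image, Xset, mem_filter, mem_univ, true_and]
    constructor
    · rintro ⟨t, ht, rfl⟩
      rw [hinv]; exact not_lt.mpr (le_of_lt ht)
    · intro hu
      refine ⟨σ u, ?_, hinv u⟩
      rw [hinv]
      rcases lt_or_eq_of_le (not_lt.mp hu) with h' | h'
      · exact h'
      · exact absurd (ρ_inj h') (hne u)
  have h1 : (Xset σ).card + (univ.filter (fun t => ¬ ρ t < ρ (σ t))).card
      = Fintype.card (Fin p ⊕ Fin q) :=
    Finset.card_filter_add_card_filter_not _
  rw [← himg, Finset.card_image_of_injective _ hσinj] at h1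
  simpa [two_mul, Fintype.card_sum] using h1

lemma coA_sigma (σ : Fin p ⊕ Fin q → Fin p ⊕ Fin q) (hinv : ∀ t, σ (σ t) = t)
    (t : Fin p ⊕ Fin q) : coA σ (σ t) = coA σ t := by
  rw [coA, coA, hinv, add_comm]

lemma coB_sigma (σ : Fin p ⊕ Fin q → Fin p ⊕ Fin q) (hinv : ∀ t, σ (σ t) = t)
    (t : Fin p ⊕ Fin q) : coB σ (σ t) = coB σ t := by
  rw [coB, coB, hinv, add_comm]

lemma coA_mn (σ : Fin p ⊕ Fin q → Fin p ⊕ Fin q) (hinv : ∀ t, σ (σ t) = t)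
    (t : Fin p ⊕ Fin q) : coA σ (mn σ t) = coA σ t := by
  rw [mn]; split
  · rfl
  · exact coA_sigma σ hinv t

lemma coB_mn (σ : Fin p ⊕ Fin q → Fin p ⊕ Fin q) (hinv : ∀ t, σ (σ t) = t)
    (t : Fin p ⊕ Fin q) : coB σ (mn σ t) = coB σ t := by
  rw [mn]; split
  · rfl
  · exact coB_sigma σ hinv t

lemma mn_mem_Xset (σ : Fin p ⊕ Fin q → Fin p ⊕ Fin q) (hinv : ∀ t, σ (σ t) = t)
    (hne : ∀ t, σ t ≠ t) (t : Fin p ⊕ Fin q) : mn σ t ∈ Xset σ := by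
  rw [mn]
  split <;> rename_i h <;> rw [Xset, mem_filter]
  · refine ⟨mem_univ _, lt_of_le_of_ne h ?_⟩
    exact fun he => hne t (ρ_inj he).symm
  · refine ⟨mem_univ _, ?_⟩
    rw [hinv]
    exact lt_of_not_ge h

/-- the crucial rank-2 lemma: if all 2×2 minors vanish, the two constraint values agree. -/
lemma exists_pivots (hpo : Odd p) (hqo : Odd q)
    {σ : Fin p ⊕ Fin q → Fin p ⊕ Fin q} (hinv : ∀ t, σ (σ t) = t) (hne : ∀ t, σ t ≠ t)
    {V : Fin p ⊕ Fin q → ℤ} (hVσ : ∀ t, V (σ t) = V t) {c₁ c₂ : ℤ} (hc : c₁ ≠ c₂)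
    (h1 : ∑ t, lsign t * V t = c₁) (h2 : ∑ t, rsign t * V t = c₂) :
    ∃ ab : (Fin p ⊕ Fin q) × (Fin p ⊕ Fin q),
      coA σ ab.1 * coB σ ab.2 ≠ coA σ ab.2 * coB σ ab.1 := by
  by_contra hall
  push_neg at hall
  have hall' : ∀ a b : Fin p ⊕ Fin q, coA σ a * coB σ b = coA σ b * coB σ a :=
    fun a b => hall (a, b)
  have hXA : ∑ t ∈ Xset σ, coA σ t = -1 := by
    have h := sum_split σ hinv hne lsign
    rw [sum_lsign hpo] at h
    rw [h]; exact Finset.sum_congr rfl fun t _ => rfl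
  have hXB : ∑ t ∈ Xset σ, coB σ t = -1 := by
    have h := sum_split σ hinv hne rsign
    rw [sum_rsign hqo] at h
    rw [h]; exact Finset.sum_congr rfl fun t _ => rfl
  have hXV1 : ∑ t ∈ Xset σ, coA σ t * V t = c₁ := by
    have h := sum_split σ hinv hne (fun t => lsign t * V t)
    rw [h1] at h
    rw [h]
    refine Finset.sum_congr rfl fun t _ => ?_
    rw [hVσ, coA]; ring
  have hXV2 : ∑ t ∈ Xset σ, coB σ t * V t = c₂ := by
    have h := sum_split σ hinv hne (fun t => rsign t * V t)
    rw [h2] at h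
    rw [h]
    refine Finset.sum_congr rfl fun t _ => ?_
    rw [hVσ, coB]; ring
  have hr : ∃ r ∈ Xset σ, coA σ r ≠ 0 := by
    by_contra hz
    push_neg at hz
    rw [Finset.sum_eq_zero hz] at hXA
    norm_num at hXA
  obtain ⟨r₀, hr₀X, hr₀⟩ := hr
  have hAB : coA σ r₀ = coB σ r₀ := by
    have h := Finset.sum_congr rfl (fun t (_ : t ∈ Xset σ) => hall' r₀ t)
    rw [← Finset.mul_sum, ← Finset.sum_mul, hXA, hXB] at h
    linarith
  have hkey : c₂ * coA σ r₀ = c₁ * coA σ r₀ := by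
    calc c₂ * coA σ r₀ = (∑ t ∈ Xset σ, coB σ t * V t) * coA σ r₀ := by rw [hXV2]
    _ = ∑ t ∈ Xset σ, coB σ t * V t * coA σ r₀ := by rw [Finset.sum_mul]
    _ = ∑ t ∈ Xset σ, coA σ t * V t * coB σ r₀ := by
        refine Finset.sum_congr rfl fun t _ => ?_
        linear_combination V t * (hall' r₀ t)
    _ = (∑ t ∈ Xset σ, coA σ t * V t) * coB σ r₀ := by rw [Finset.sum_mul]
    _ = c₁ * coB σ r₀ := by rw [hXV1]
    _ = c₁ * coA σ r₀ := by rw [hAB]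
  exact hc (mul_right_cancel₀ hr₀ hkey).symm

lemma sum_X_coA (σ : Fin p ⊕ Fin q → Fin p ⊕ Fin q) (hinv : ∀ t, σ (σ t) = t)
    (hne : ∀ t, σ t ≠ t) {V : Fin p ⊕ Fin q → ℤ} (hVσ : ∀ t, V (σ t) = V t) :
    ∑ t ∈ Xset σ, coA σ t * V t = ∑ t, lsign t * V t := by
  rw [sum_split σ hinv hne (fun t => lsign t * V t)]
  refine Finset.sum_congr rfl fun t _ => ?_
  rw [hVσ, coA]; ring

lemma sum_X_coB (σ : Fin p ⊕ Fin q → Fin p ⊕ Fin q) (hinv : ∀ t, σ (σ t) = t)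
    (hne : ∀ t, σ t ≠ t) {V : Fin p ⊕ Fin q → ℤ} (hVσ : ∀ t, V (σ t) = V t) :
    ∑ t ∈ Xset σ, coB σ t * V t = ∑ t, rsign t * V t := by
  rw [sum_split σ hinv hne (fun t => rsign t * V t)]
  refine Finset.sum_congr rfl fun t _ => ?_
  rw [hVσ, coB]; ring

lemma sum_lsign_mul (A : Fin p → ℤ) (B : Fin q → ℤ) :
    ∑ t : Fin p ⊕ Fin q, lsign t * Sum.elim A B t
      = ∑ k : Fin p, (-1:ℤ)^((k:ℕ)+1) * A k := by
  rw [Fintype.sum_sum_type]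
  simp [lsign]

lemma sum_rsign_mul (A : Fin p → ℤ) (B : Fin q → ℤ) :
    ∑ t : Fin p ⊕ Fin q, rsign t * Sum.elim A B t
      = ∑ k : Fin q, (-1:ℤ)^((k:ℕ)+1) * B k := by
  rw [Fintype.sum_sum_type]
  simp [rsign]

lemma good_sigma_facts [NeZero p] {σ : Fin p ⊕ Fin q → Fin p ⊕ Fin q}
    (hinv : ∀ t, σ (σ t) = t) (hne : ∀ t, σ t ≠ t)
    (hex : ∃ ab : (Fin p ⊕ Fin q) × (Fin p ⊕ Fin q),
      coA σ ab.1 * coB σ ab.2 ≠ coA σ ab.2 * coB σ ab.1) :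
    pivA σ ∈ Xset σ ∧ pivB σ ∈ Xset σ ∧ pivA σ ≠ pivB σ ∧
      coA σ (pivA σ) * coB σ (pivB σ) ≠ coA σ (pivB σ) * coB σ (pivA σ) ∧
      Dset σ = core σ := by
  classical
  have hpiv : coA σ (pivots σ).1 * coB σ (pivots σ).2
      ≠ coA σ (pivots σ).2 * coB σ (pivots σ).1 := by
    rw [pivots, dif_pos hex]
    exact hex.choose_spec
  have hdet : coA σ (pivA σ) * coB σ (pivB σ) ≠ coA σ (pivB σ) * coB σ (pivA σ) := by
    rw [pivA, pivB, coA_mn σ hinv, coA_mn σ hinv, coB_mn σ hinv, coB_mn σ hinv]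
    exact hpiv
  have hA : pivA σ ∈ Xset σ := mn_mem_Xset σ hinv hne _
  have hB : pivB σ ∈ Xset σ := mn_mem_Xset σ hinv hne _
  have hAB : pivA σ ≠ pivB σ := by
    intro h
    rw [h] at hdet
    exact hdet rfl
  refine ⟨hA, hB, hAB, hdet, ?_⟩
  have hBmem : pivB σ ∈ (Xset σ).erase (pivA σ) := mem_erase.mpr ⟨hAB.symm, hB⟩
  have hcore : (core σ).card = (Xset σ).card - 2 := by
    rw [core, Finset.card_erase_of_mem hBmem, Finset.card_erase_of_mem hA]
    omega
  have hX2 := card_Xset σ hinv hne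
  rw [Dset, if_pos]
  omega

end CountCross

open CountCross in
/-- Counting bound: pairs `(J₁,J₂) ∈ A_{p,i₁} × A_{q,i₂}` (odd `p,q ≥ 3`) in which
every value of the combined multiset has multiplicity exactly `2` and the two
multisets intersect, with `2i₁ ≠ n+1`, `2i₂ ≠ n+1`, `i₁ ≠ i₂`, number at most
`C · bn^((p+q-4)/2)` with `C = C(p,q)`. -/
theorem count_cross_matched_pairs_odd
    (p q : ℕ) (hp : 3 ≤ p) (hpo : Odd p) (hq : 3 ≤ q) (hqo : Odd q) :
    ∃ C : ℕ, ∀ (n bn : ℕ), 0 < n → 0 < bn → ∀ (i₁ i₂ : ℤ),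
      1 ≤ i₁ → i₁ ≤ (n : ℤ) → 1 ≤ i₂ → i₂ ≤ (n : ℤ) → i₁ ≠ i₂ →
      2 * i₁ ≠ (n : ℤ) + 1 → 2 * i₂ ≠ (n : ℤ) + 1 →
      Nat.card {J : (Fin p → ℤ) × (Fin q → ℤ) //
        (∀ k, J.1 k ≠ 0 ∧ |J.1 k| ≤ (bn : ℤ)) ∧
        (∀ k, J.2 k ≠ 0 ∧ |J.2 k| ≤ (bn : ℤ)) ∧
        (∑ k : Fin p, (-1 : ℤ) ^ ((k : ℕ) + 1) * J.1 k) = 2 * i₁ - 1 - (n : ℤ) ∧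
        (∑ k : Fin q, (-1 : ℤ) ^ ((k : ℕ) + 1) * J.2 k) = 2 * i₂ - 1 - (n : ℤ) ∧
        (∀ v : ℤ,
          (Finset.univ.filter (fun k : Fin p => J.1 k = v)).card +
            (Finset.univ.filter (fun k : Fin q => J.2 k = v)).card = 0 ∨
          (Finset.univ.filter (fun k : Fin p => J.1 k = v)).card +
            (Finset.univ.filter (fun k : Fin q => J.2 k = v)).card = 2) ∧
        (∃ (k : Fin p) (l : Fin q), J.1 k = J.2 l)} ≤
      C * bn ^ ((p + q - 4) / 2) := by
  classical
  haveI : NeZero p := ⟨by omega⟩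
  refine ⟨Fintype.card ((Fin p ⊕ Fin q) → (Fin p ⊕ Fin q)) * 3 ^ ((p + q - 4) / 2), ?_⟩
  intro n bn hn hbn i₁ i₂ hi₁1 hi₁n hi₂1 hi₂n hne12 hn₁ hn₂
  set Ω : Finset (((Fin p ⊕ Fin q) → (Fin p ⊕ Fin q)) × ((Fin p ⊕ Fin q) → ℤ)) :=
    univ.biUnion (fun σ => {σ} ×ˢ Fintype.piFinset
      (fun t => if t ∈ Dset σ then Finset.Icc (-(bn:ℤ)) (bn:ℤ) else {0})) with hΩ
  -- packaged facts about the partner involution of an admissible pair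
  have pack : ∀ (A : Fin p → ℤ) (B : Fin q → ℤ),
      (∀ k, A k ≠ 0 ∧ |A k| ≤ (bn : ℤ)) →
      (∀ k, B k ≠ 0 ∧ |B k| ≤ (bn : ℤ)) →
      (∑ k : Fin p, (-1 : ℤ) ^ ((k : ℕ) + 1) * A k) = 2 * i₁ - 1 - (n : ℤ) →
      (∑ k : Fin q, (-1 : ℤ) ^ ((k : ℕ) + 1) * B k) = 2 * i₂ - 1 - (n : ℤ) →
      (∀ v : ℤ,
        (Finset.univ.filter (fun k : Fin p => A k = v)).card +
          (Finset.univ.filter (fun k : Fin q => B k = v)).card = 0 ∨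
        (Finset.univ.filter (fun k : Fin p => A k = v)).card +
          (Finset.univ.filter (fun k : Fin q => B k = v)).card = 2) →
      (∀ t, partner (Sum.elim A B) (partner (Sum.elim A B) t) = t) ∧
      (∀ t, partner (Sum.elim A B) t ≠ t) ∧
      (∀ t, Sum.elim A B (partner (Sum.elim A B) t) = Sum.elim A B t) ∧
      (Dset (partner (Sum.elim A B)) = core (partner (Sum.elim A B)) ∧
        pivA (partner (Sum.elim A B)) ∈ Xset (partner (Sum.elim A B)) ∧
        pivB (partner (Sum.elim A B)) ∈ Xset (partner (Sum.elim A B)) ∧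
        pivA (partner (Sum.elim A B)) ≠ pivB (partner (Sum.elim A B)) ∧
        coA (partner (Sum.elim A B)) (pivA (partner (Sum.elim A B)))
            * coB (partner (Sum.elim A B)) (pivB (partner (Sum.elim A B)))
          ≠ coA (partner (Sum.elim A B)) (pivB (partner (Sum.elim A B)))
            * coB (partner (Sum.elim A B)) (pivA (partner (Sum.elim A B)))) ∧
      (∑ t ∈ Xset (partner (Sum.elim A B)),
          coA (partner (Sum.elim A B)) t * Sum.elim A B t = 2 * i₁ - 1 - (n : ℤ)) ∧
      (∑ t ∈ Xset (partner (Sum.elim A B)),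
          coB (partner (Sum.elim A B)) t * Sum.elim A B t = 2 * i₂ - 1 - (n : ℤ)) := by
    intro A B hA hB hs1 hs2 hmult
    have h2 : ∀ t : Fin p ⊕ Fin q,
        (univ.filter (fun u => Sum.elim A B u = Sum.elim A B t)).card = 2 := by
      intro t
      have hfc : (univ.filter (fun u => Sum.elim A B u = Sum.elim A B t)).card
          = (univ.filter (fun k : Fin p => A k = Sum.elim A B t)).card
            + (univ.filter (fun k : Fin q => B k = Sum.elim A B t)).card :=
        filter_sum_card _
      have ht : t ∈ univ.filter (fun u => Sum.elim A B u = Sum.elim A B t) :=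
        mem_filter.mpr ⟨mem_univ _, rfl⟩
      have hpos := Finset.card_pos.mpr ⟨t, ht⟩
      rcases hmult (Sum.elim A B t) with h | h <;> omega
    have hsp := partner_spec (p := p) (q := q) h2
    have hne' : ∀ t, partner (Sum.elim A B) t ≠ t := fun t => (hsp t).1
    have hVσ : ∀ t, Sum.elim A B (partner (Sum.elim A B) t) = Sum.elim A B t :=
      fun t => (hsp t).2.1
    have hinv : ∀ t, partner (Sum.elim A B) (partner (Sum.elim A B) t) = t := fun t =>
      ((hsp (partner (Sum.elim A B) t)).2.2 t (Ne.symm (hne' t)) (hVσ t).symm).symm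
    have hL1 : ∑ t, lsign t * Sum.elim A B t = 2 * i₁ - 1 - (n : ℤ) := by
      rw [sum_lsign_mul]; exact hs1
    have hL2 : ∑ t, rsign t * Sum.elim A B t = 2 * i₂ - 1 - (n : ℤ) := by
      rw [sum_rsign_mul]; exact hs2
    have hc : (2 * i₁ - 1 - (n : ℤ)) ≠ (2 * i₂ - 1 - (n : ℤ)) := by
      intro h; exact hne12 (by omega)
    have hex := exists_pivots hpo hqo hinv hne' hVσ hc hL1 hL2
    obtain ⟨hXa, hXb, hab, hdet, hDc⟩ := good_sigma_facts hinv hne' hex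
    refine ⟨hinv, hne', hVσ, ⟨hDc, hXa, hXb, hab, hdet⟩, ?_, ?_⟩
    · rw [sum_X_coA _ hinv hne' hVσ]; exact hL1
    · rw [sum_X_coB _ hinv hne' hVσ]; exact hL2
  have hmem : ∀ J : {J : (Fin p → ℤ) × (Fin q → ℤ) //
        (∀ k, J.1 k ≠ 0 ∧ |J.1 k| ≤ (bn : ℤ)) ∧
        (∀ k, J.2 k ≠ 0 ∧ |J.2 k| ≤ (bn : ℤ)) ∧
        (∑ k : Fin p, (-1 : ℤ) ^ ((k : ℕ) + 1) * J.1 k) = 2 * i₁ - 1 - (n : ℤ) ∧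
        (∑ k : Fin q, (-1 : ℤ) ^ ((k : ℕ) + 1) * J.2 k) = 2 * i₂ - 1 - (n : ℤ) ∧
        (∀ v : ℤ,
          (Finset.univ.filter (fun k : Fin p => J.1 k = v)).card +
            (Finset.univ.filter (fun k : Fin q => J.2 k = v)).card = 0 ∨
          (Finset.univ.filter (fun k : Fin p => J.1 k = v)).card +
            (Finset.univ.filter (fun k : Fin q => J.2 k = v)).card = 2) ∧
        (∃ (k : Fin p) (l : Fin q), J.1 k = J.2 l)},
      ((partner (Sum.elim J.1.1 J.1.2),
        fun t => if t ∈ Dset (partner (Sum.elim J.1.1 J.1.2))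
          then Sum.elim J.1.1 J.1.2 t else 0) :
        ((Fin p ⊕ Fin q) → (Fin p ⊕ Fin q)) × ((Fin p ⊕ Fin q) → ℤ)) ∈ Ω := by
    intro J
    rw [hΩ]
    refine Finset.mem_biUnion.mpr ⟨partner (Sum.elim J.1.1 J.1.2), mem_univ _, ?_⟩
    refine Finset.mem_product.mpr ⟨Finset.mem_singleton_self _, ?_⟩
    refine Fintype.mem_piFinset.mpr fun t => ?_
    dsimp only
    by_cases ht : t ∈ Dset (partner (Sum.elim J.1.1 J.1.2))
    · rw [if_pos ht, if_pos ht, Finset.mem_Icc]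
      rcases t with k | k <;> simp only [Sum.elim_inl, Sum.elim_inr]
      · exact abs_le.mp (J.2.1 k).2
      · exact abs_le.mp (J.2.2.1 k).2
    · rw [if_neg ht, if_neg ht]
      exact Finset.mem_singleton_self 0
  have key : Nat.card {J : (Fin p → ℤ) × (Fin q → ℤ) //
        (∀ k, J.1 k ≠ 0 ∧ |J.1 k| ≤ (bn : ℤ)) ∧
        (∀ k, J.2 k ≠ 0 ∧ |J.2 k| ≤ (bn : ℤ)) ∧
        (∑ k : Fin p, (-1 : ℤ) ^ ((k : ℕ) + 1) * J.1 k) = 2 * i₁ - 1 - (n : ℤ) ∧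
        (∑ k : Fin q, (-1 : ℤ) ^ ((k : ℕ) + 1) * J.2 k) = 2 * i₂ - 1 - (n : ℤ) ∧
        (∀ v : ℤ,
          (Finset.univ.filter (fun k : Fin p => J.1 k = v)).card +
            (Finset.univ.filter (fun k : Fin q => J.2 k = v)).card = 0 ∨
          (Finset.univ.filter (fun k : Fin p => J.1 k = v)).card +
            (Finset.univ.filter (fun k : Fin q => J.2 k = v)).card = 2) ∧
        (∃ (k : Fin p) (l : Fin q), J.1 k = J.2 l)} ≤ Ω.card := by
    rw [← Nat.card_eq_finsetCard]
    refine Nat.card_le_card_of_injective (fun J => ⟨_, hmem J⟩) ?_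
    intro J J' hJJ
    simp only [Subtype.mk.injEq, Prod.mk.injEq] at hJJ
    obtain ⟨hσ, hf⟩ := hJJ
    obtain ⟨hinv, hne', hVσ, ⟨hDc, hXa, hXb, hab, hdet⟩, hc1, hc2⟩ :=
      pack J.1.1 J.1.2 J.2.1 J.2.2.1 J.2.2.2.1 J.2.2.2.2.1 J.2.2.2.2.2.1
    obtain ⟨hinv', hne'', hVσ', ⟨hDc', hXa', hXb', hab', hdet'⟩, hc1', hc2'⟩ :=
      pack J'.1.1 J'.1.2 J'.2.1 J'.2.2.1 J'.2.2.2.1 J'.2.2.2.2.1 J'.2.2.2.2.2.1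
    rw [← hσ] at hVσ' hc1' hc2'
    -- values agree off the pivot orbits
    have hveq : ∀ t ∈ Dset (partner (Sum.elim J.1.1 J.1.2)),
        Sum.elim J.1.1 J.1.2 t = Sum.elim J'.1.1 J'.1.2 t := by
      intro t ht
      have hft := congrFun hf t
      rw [← hσ] at hft
      rwa [if_pos ht, if_pos ht] at hft
    set σ := partner (Sum.elim J.1.1 J.1.2) with hσdef
    set V := Sum.elim J.1.1 J.1.2 with hVdef
    set V' := Sum.elim J'.1.1 J'.1.2 with hV'def
    set a := pivA σ with hadef
    set b := pivB σ with hbdef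
    have hw0 : ∀ t ∈ Xset σ, t ≠ a → t ≠ b → V t = V' t := by
      intro t htX hta htb
      refine hveq t ?_
      rw [hDc, core]
      exact mem_erase.mpr ⟨htb, mem_erase.mpr ⟨hta, htX⟩⟩
    have hsubset : ({a, b} : Finset (Fin p ⊕ Fin q)) ⊆ Xset σ := by
      intro t ht
      rcases Finset.mem_insert.mp ht with rfl | ht'
      · exact hXa
      · rw [Finset.mem_singleton.mp ht']; exact hXb
    have hEA : coA σ a * (V a - V' a) + coA σ b * (V b - V' b) = 0 := by
      have hsum : ∑ t ∈ Xset σ, coA σ t * (V t - V' t) = 0 := by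
        have : ∑ t ∈ Xset σ, coA σ t * (V t - V' t)
            = (∑ t ∈ Xset σ, coA σ t * V t) - ∑ t ∈ Xset σ, coA σ t * V' t := by
          rw [← Finset.sum_sub_distrib]
          exact Finset.sum_congr rfl fun t _ => by ring
        rw [this, hc1, hc1', sub_self]
      have hred : ∑ t ∈ ({a, b} : Finset (Fin p ⊕ Fin q)), coA σ t * (V t - V' t)
          = ∑ t ∈ Xset σ, coA σ t * (V t - V' t) := by
        refine Finset.sum_subset hsubset fun t htX htp => ?_
        have hta : t ≠ a := fun h => htp (by rw [h]; exact Finset.mem_insert_self _ _)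
        have htb : t ≠ b := fun h => htp (by
          rw [h]; exact Finset.mem_insert_of_mem (Finset.mem_singleton_self _))
        rw [hw0 t htX hta htb, sub_self, mul_zero]
      have hfin := hred.trans hsum
      rwa [Finset.sum_pair hab] at hfin
    have hEB : coB σ a * (V a - V' a) + coB σ b * (V b - V' b) = 0 := by
      have hsum : ∑ t ∈ Xset σ, coB σ t * (V t - V' t) = 0 := by
        have : ∑ t ∈ Xset σ, coB σ t * (V t - V' t)
            = (∑ t ∈ Xset σ, coB σ t * V t) - ∑ t ∈ Xset σ, coB σ t * V' t := by
          rw [← Finset.sum_sub_distrib]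
          exact Finset.sum_congr rfl fun t _ => by ring
        rw [this, hc2, hc2', sub_self]
      have hred : ∑ t ∈ ({a, b} : Finset (Fin p ⊕ Fin q)), coB σ t * (V t - V' t)
          = ∑ t ∈ Xset σ, coB σ t * (V t - V' t) := by
        refine Finset.sum_subset hsubset fun t htX htp => ?_
        have hta : t ≠ a := fun h => htp (by rw [h]; exact Finset.mem_insert_self _ _)
        have htb : t ≠ b := fun h => htp (by
          rw [h]; exact Finset.mem_insert_of_mem (Finset.mem_singleton_self _))
        rw [hw0 t htX hta htb, sub_self, mul_zero]
      have hfin := hred.trans hsum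
      rwa [Finset.sum_pair hab] at hfin
    have hxa : V a = V' a := by
      have h0 : (coA σ a * coB σ b - coA σ b * coB σ a) * (V a - V' a) = 0 := by
        linear_combination coB σ b * hEA - coA σ b * hEB
      rcases mul_eq_zero.mp h0 with h | h
      · exact absurd h (sub_ne_zero.mpr hdet)
      · linarith [sub_eq_zero.mp h]
    have hxb : V b = V' b := by
      have h0 : (coA σ b * coB σ a - coA σ a * coB σ b) * (V b - V' b) = 0 := by
        linear_combination coB σ a * hEA - coA σ a * hEB
      rcases mul_eq_zero.mp h0 with h | h
      · exact absurd h (sub_ne_zero.mpr (Ne.symm hdet))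
      · linarith [sub_eq_zero.mp h]
    have hallX : ∀ t ∈ Xset σ, V t = V' t := by
      intro t htX
      by_cases hta : t = a
      · rw [hta]; exact hxa
      by_cases htb : t = b
      · rw [htb]; exact hxb
      exact hw0 t htX hta htb
    have hall : ∀ t, V t = V' t := by
      intro t
      by_cases htX : t ∈ Xset σ
      · exact hallX t htX
      · have hσt : σ t ∈ Xset σ := by
          rw [Xset, mem_filter]
          refine ⟨mem_univ _, ?_⟩
          rw [hinv]
          rcases lt_or_eq_of_le (not_lt.mp (by
            rw [Xset, mem_filter] at htX
            exact fun h => htX ⟨mem_univ _, h⟩)) with h' | h'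
          · exact h'
          · exact absurd (ρ_inj h') (hne' t)
        calc V t = V (σ t) := (hVσ t).symm
        _ = V' (σ t) := hallX _ hσt
        _ = V' t := hVσ' t
    refine Subtype.ext (Prod.ext ?_ ?_)
    · funext k; exact hall (Sum.inl k)
    · funext k; exact hall (Sum.inr k)
  refine le_trans key ?_
  have hterm : ∀ σ : (Fin p ⊕ Fin q) → (Fin p ⊕ Fin q),
      ({σ} ×ˢ Fintype.piFinset
        (fun t => if t ∈ Dset σ then Finset.Icc (-(bn:ℤ)) (bn:ℤ) else {0})).card
      ≤ (2 * bn + 1) ^ ((p + q - 4) / 2) := by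
    intro σ
    rw [Finset.card_product, Finset.card_singleton, one_mul, Fintype.card_piFinset]
    have hcard : ∀ t : Fin p ⊕ Fin q,
        ((if t ∈ Dset σ then Finset.Icc (-(bn:ℤ)) (bn:ℤ) else {0}).card)
          = if t ∈ Dset σ then 2 * bn + 1 else 1 := by
      intro t; split
      · rw [Int.card_Icc]; omega
      · simp
    calc ∏ t : Fin p ⊕ Fin q,
          ((if t ∈ Dset σ then Finset.Icc (-(bn:ℤ)) (bn:ℤ) else {0}).card)
        = ∏ t : Fin p ⊕ Fin q, (if t ∈ Dset σ then 2 * bn + 1 else 1) :=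
          Finset.prod_congr rfl fun t _ => hcard t
      _ = (2 * bn + 1) ^ (Dset σ).card := by
          rw [Finset.prod_ite, Finset.prod_const, Finset.prod_const, one_pow, mul_one,
            Finset.filter_mem_eq_inter, Finset.univ_inter]
      _ ≤ (2 * bn + 1) ^ ((p + q - 4) / 2) :=
          Nat.pow_le_pow_right (by omega) (Dset_card_le σ)
  calc Ω.card ≤ ∑ σ : (Fin p ⊕ Fin q) → (Fin p ⊕ Fin q),
        ({σ} ×ˢ Fintype.piFinset
          (fun t => if t ∈ Dset σ then Finset.Icc (-(bn:ℤ)) (bn:ℤ) else {0})).card := by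
        rw [hΩ]; exact Finset.card_biUnion_le
    _ ≤ ∑ _σ : (Fin p ⊕ Fin q) → (Fin p ⊕ Fin q), (2 * bn + 1) ^ ((p + q - 4) / 2) :=
        Finset.sum_le_sum fun σ _ => hterm σ
    _ = Fintype.card ((Fin p ⊕ Fin q) → (Fin p ⊕ Fin q))
          * (2 * bn + 1) ^ ((p + q - 4) / 2) := by
        rw [Finset.sum_const, smul_eq_mul, Finset.card_univ]
    _ ≤ Fintype.card ((Fin p ⊕ Fin q) → (Fin p ⊕ Fin q))
          * (3 ^ ((p + q - 4) / 2) * bn ^ ((p + q - 4) / 2)) := by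
        refine Nat.mul_le_mul_left _ ?_
        rw [← Nat.mul_pow]
        exact Nat.pow_le_pow_left (by omega) _
    _ = Fintype.card ((Fin p ⊕ Fin q) → (Fin p ⊕ Fin q))
          * 3 ^ ((p + q - 4) / 2) * bn ^ ((p + q - 4) / 2) := by ring
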